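/- Let n ≥ 1 be an integer and h = 1/(n+1), with the fission matrix C built from cube values w as in the context. Then: (a) if u ∈ ℝ^{n³} is such that for every node (i,j,k) with u_{ijk} ≠ 0 all eight cubes incident to (i,j,k) have w_{pqr} = 0, then Cu = 0; and (b) if v ∈ ℝ^{n³} is such that every node (i,j,k) with v_{ijk} ≠ 0 is incident to at least one cube with w_{pqr} ≠ 0, then w_min·(h³/216)·‖v‖² ≤ vᵀCv ≤ w_max·h³·‖v‖². In particular C is block diagonal with respect to the coordinate decomposition into such nodes, with one block zero and the other block having condition number at most 216·w_max/w_min. -/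

import Mathlib

open MeasureTheory Matrix
open Kronecker
section helpers
lemma helper_int (h a : ℝ) (hp : 0 < h) (f : ℝ → ℝ) :
    (∫ x in a..(a+h), f ((x - a)/h)) = h * ∫ x in (0:ℝ)..1, f x := by
  rw [show (∫ x in a..(a+h), f ((x - a)/h)) = ∫ x in a..(a+h), (fun y => f (y/h)) (x - a) from rfl]
  rw [intervalIntegral.integral_comp_sub_right (fun y => f (y/h)) a]
  simp only [sub_self, add_sub_cancel_left]
  rw [intervalIntegral.integral_comp_div f hp.ne']
  rw [zero_div, div_self hp.ne']
  simp [smul_eq_mul]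

lemma int_tt : (∫ x in (0:ℝ)..1, x * x) = 1/3 := by
  simp_rw [← sq]
  rw [integral_pow]; norm_num

lemma int_tl : (∫ x in (0:ℝ)..1, x * (1 - x)) = 1/6 := by
  have : (fun x : ℝ => x * (1-x)) = fun x => x - x^2 := by funext x; ring
  rw [show (∫ x in (0:ℝ)..1, x * (1-x)) = ∫ x in (0:ℝ)..1, (x - x^2) from by rw [this]]
  rw [intervalIntegral.integral_sub intervalIntegral.intervalIntegrable_id (intervalIntegral.intervalIntegrable_pow 2)]
  rw [integral_id, integral_pow]; norm_num

lemma int_ll : (∫ x in (0:ℝ)..1, (1 - x) * (1 - x)) = 1/3 := by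
  have : (fun x : ℝ => (1-x) * (1-x)) = fun x => 1 - (2*x - x^2) := by funext x; ring
  rw [show (∫ x in (0:ℝ)..1, (1-x) * (1-x)) = ∫ x in (0:ℝ)..1, (1 - (2*x - x^2)) from by rw [this]]
  rw [intervalIntegral.integral_sub (continuous_const.intervalIntegrable _ _)]
  · rw [intervalIntegral.integral_sub ((intervalIntegral.intervalIntegrable_id).const_mul 2) (intervalIntegral.intervalIntegrable_pow 2)]
    rw [intervalIntegral.integral_const_mul, integral_id, integral_pow]
    norm_num
  · exact ((intervalIntegral.intervalIntegrable_id).const_mul 2).sub (intervalIntegral.intervalIntegrable_pow 2)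

def uInd (n : ℕ) (p : Fin (n+1)) (i : Fin n) : ℝ :=
  if p.val = i.val ∨ p.val = i.val + 1 then 1 else 0

noncomputable def mval (n : ℕ) (h : ℝ) (p : Fin (n+1)) (i i' : Fin n) : ℝ :=
  (h/6) * (uInd n p i * uInd n p i' + if i = i' then uInd n p i else 0)

lemma oneD (n : ℕ) (h : ℝ) (hp : 0 < h) (φ : Fin n → ℝ → ℝ)
    (hφ : ∀ (i : Fin n) (x : ℝ), φ i x = max 0 (1 - |x / h - ((i.val : ℝ) + 1)|))
    (p : Fin (n+1)) (i i' : Fin n) :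
    (∫ x in Set.Ioc ((p.val:ℝ)*h) (((p.val:ℝ)+1)*h), φ i x * φ i' x)
    = mval n h p i i' := by
  simp only [mval]
  set a := (p.val:ℝ)*h with ha
  have hb : ((p.val:ℝ)+1)*h = a + h := by rw [ha]; ring
  have hle : a ≤ a + h := by linarith
  rw [hb, ← intervalIntegral.integral_of_le hle]
  have hEq : ∀ (j : Fin n) (x : ℝ), x ∈ Set.uIcc a (a+h) →
      φ j x = if p.val = j.val then (x - a)/h else if p.val = j.val + 1 then 1 - (x-a)/h else 0 := by
    intro j x hx
    rw [Set.uIcc_of_le hle] at hx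
    obtain ⟨hx1, hx2⟩ := hx
    have ht0 : 0 ≤ (x-a)/h := div_nonneg (by linarith) hp.le
    have ht1 : (x-a)/h ≤ 1 := by rw [div_le_one hp]; linarith
    rw [hφ]
    by_cases h1 : p.val = j.val
    · have hc : (j.val:ℝ) = (p.val:ℝ) := by exact_mod_cast h1.symm
      have e : x / h - ((j.val:ℝ)+1) = (x-a)/h - 1 := by
        rw [ha, hc]; field_simp; ring
      rw [e, abs_of_nonpos (by linarith), if_pos h1, max_eq_right (by linarith)]
      ring
    · by_cases h2 : p.val = j.val + 1
      · have hc : (j.val:ℝ) + 1 = (p.val:ℝ) := by exact_mod_cast h2.symm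
        have e : x / h - ((j.val:ℝ)+1) = (x-a)/h := by
          rw [ha, ← hc]; field_simp
        rw [e, abs_of_nonneg ht0, if_neg h1, if_pos h2, max_eq_right (by linarith)]
      · rw [if_neg h1, if_neg h2]
        have habs : 1 ≤ |x / h - ((j.val:ℝ)+1)| := by
          have hcase : p.val + 1 ≤ j.val ∨ j.val + 2 ≤ p.val := by omega
          rcases hcase with hc | hc
          · have hcast : (p.val:ℝ) + 1 ≤ (j.val:ℝ) := by exact_mod_cast hc
            have hxj : x / h ≤ (j.val:ℝ) := by
              rw [div_le_iff₀ hp]; nlinarith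
            exact le_abs.mpr (Or.inr (by linarith))
          · have hcast : (j.val:ℝ) + 2 ≤ (p.val:ℝ) := by exact_mod_cast hc
            have hxj : (j.val:ℝ) + 2 ≤ x / h := by
              rw [le_div_iff₀ hp]; nlinarith
            exact le_abs.mpr (Or.inl (by linarith))
        exact max_eq_left (by linarith)
  rw [intervalIntegral.integral_congr (g := fun x =>
      (if p.val = i.val then (x - a)/h else if p.val = i.val + 1 then 1 - (x-a)/h else 0) *
      (if p.val = i'.val then (x - a)/h else if p.val = i'.val + 1 then 1 - (x-a)/h else 0))
    (fun x hx => by rw [hEq i x hx, hEq i' x hx])]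
  by_cases c1 : p.val = i.val <;> by_cases c2 : p.val = i.val + 1
  · omega
  · have hui : uInd n p i = 1 := by simp [uInd, c1]
    by_cases c3 : p.val = i'.val <;> by_cases c4 : p.val = i'.val + 1
    · omega
    · -- RR
      have hii : i = i' := Fin.ext (by omega)
      subst hii
      simp only [if_pos c1]
      rw [show (∫ x in a..(a+h), (x-a)/h * ((x-a)/h)) = h * ∫ x in (0:ℝ)..1, x * x from
        helper_int h a hp (fun t => t * t), int_tt, hui]
      norm_num
      ring
    · -- RL
      have hne : i ≠ i' := by intro e; rw [e] at c1; omega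
      have hui' : uInd n p i' = 1 := by simp [uInd, c4]
      simp only [if_pos c1, if_neg c3, if_pos c4]
      rw [show (∫ x in a..(a+h), (x-a)/h * (1 - (x-a)/h)) = h * ∫ x in (0:ℝ)..1, x * (1-x) from
        helper_int h a hp (fun t => t * (1 - t)), int_tl, hui, hui', if_neg hne]
      ring
    · -- RN
      have hne : i ≠ i' := by intro e; rw [e] at c1; omega
      have hui' : uInd n p i' = 0 := by simp [uInd, c3, c4]
      simp only [if_pos c1, if_neg c3, if_neg c4]
      rw [hui, hui', if_neg hne]
      simp
  · have hui : uInd n p i = 1 := by simp [uInd, c2]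
    by_cases c3 : p.val = i'.val <;> by_cases c4 : p.val = i'.val + 1
    · omega
    · -- LR
      have hne : i ≠ i' := by intro e; rw [e] at c2; omega
      have hui' : uInd n p i' = 1 := by simp [uInd, c3]
      simp only [if_neg c1, if_pos c2, if_pos c3]
      rw [show (∫ x in a..(a+h), (1 - (x-a)/h) * ((x-a)/h)) = h * ∫ x in (0:ℝ)..1, (1-x) * x from
        helper_int h a hp (fun t => (1 - t) * t)]
      rw [show (∫ x in (0:ℝ)..1, (1-x) * x) = ∫ x in (0:ℝ)..1, x * (1-x) from by
        apply intervalIntegral.integral_congr; intro x _; ring, int_tl, hui, hui', if_neg hne]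
      ring
    · -- LL
      have hii : i = i' := Fin.ext (by omega)
      subst hii
      simp only [if_neg c1, if_pos c2]
      rw [show (∫ x in a..(a+h), (1 - (x-a)/h) * (1 - (x-a)/h)) = h * ∫ x in (0:ℝ)..1, (1-x) * (1-x) from
        helper_int h a hp (fun t => (1 - t) * (1 - t)), int_ll, hui]
      norm_num
      ring
    · -- LN
      have hne : i ≠ i' := by intro e; rw [e] at c2; omega
      have hui' : uInd n p i' = 0 := by simp [uInd, c3, c4]
      simp only [if_neg c1, if_pos c2, if_neg c3, if_neg c4]
      rw [hui, hui', if_neg hne]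
      simp
  · -- N*
    have hui : uInd n p i = 0 := by simp [uInd, c1, c2]
    simp only [if_neg c1, if_neg c2, zero_mul, intervalIntegral.integral_zero]
    rw [hui]
    by_cases e : i = i'
    · subst e; simp
    · simp [e]

def Bset (n : ℕ) (h : ℝ) (p : Fin (n+1)) : Set ℝ := Set.Ioc ((p.val:ℝ)*h) (((p.val:ℝ)+1)*h)

def B3 (n : ℕ) (h : ℝ) (c : Fin (n+1) × Fin (n+1) × Fin (n+1)) : Set (ℝ×ℝ×ℝ) :=
  Bset n h c.1 ×ˢ (Bset n h c.2.1 ×ˢ Bset n h c.2.2)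

lemma B3_meas (n : ℕ) (h : ℝ) (c : Fin (n+1) × Fin (n+1) × Fin (n+1)) : MeasurableSet (B3 n h c) :=
  measurableSet_Ioc.prod (measurableSet_Ioc.prod measurableSet_Ioc)

lemma plane1_null (b : ℝ) : volume {z : ℝ×ℝ×ℝ | z.1 = b} = 0 := by
  have : {z : ℝ×ℝ×ℝ | z.1 = b} = ({b} : Set ℝ) ×ˢ (Set.univ : Set (ℝ×ℝ)) := by
    ext z; simp [Set.mem_prod]
  rw [this, MeasureTheory.Measure.volume_eq_prod, MeasureTheory.Measure.prod_prod]
  simp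

lemma plane2_null (b : ℝ) : volume {z : ℝ×ℝ×ℝ | z.2.1 = b} = 0 := by
  have : {z : ℝ×ℝ×ℝ | z.2.1 = b} = (Set.univ : Set ℝ) ×ˢ (({b} : Set ℝ) ×ˢ (Set.univ : Set ℝ)) := by
    ext z; simp [Set.mem_prod]
  rw [this, MeasureTheory.Measure.volume_eq_prod, MeasureTheory.Measure.prod_prod,
    MeasureTheory.Measure.volume_eq_prod, MeasureTheory.Measure.prod_prod]
  simp

lemma plane3_null (b : ℝ) : volume {z : ℝ×ℝ×ℝ | z.2.2 = b} = 0 := by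
  have : {z : ℝ×ℝ×ℝ | z.2.2 = b} = (Set.univ : Set ℝ) ×ˢ ((Set.univ : Set ℝ) ×ˢ ({b} : Set ℝ)) := by
    ext z; simp [Set.mem_prod]
  rw [this, MeasureTheory.Measure.volume_eq_prod, MeasureTheory.Measure.prod_prod,
    MeasureTheory.Measure.volume_eq_prod, MeasureTheory.Measure.prod_prod]
  simp

lemma Ioc_cover (n : ℕ) (h : ℝ) (hh : h = 1/((n:ℝ)+1)) :
    (⋃ p : Fin (n+1), Bset n h p) = Set.Ioc (0:ℝ) 1 := by
  have hn1 : (0:ℝ) < (n:ℝ)+1 := by positivity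
  have hp : 0 < h := by rw [hh]; positivity
  have hh1 : ((n:ℝ)+1) * h = 1 := by rw [hh]; field_simp
  ext x
  simp only [Bset, Set.mem_iUnion, Set.mem_Ioc]
  constructor
  · rintro ⟨p, h1, h2⟩
    have hp0 : (0:ℝ) ≤ (p.val:ℝ) := by positivity
    have hpn : (p.val:ℝ) + 1 ≤ (n:ℝ) + 1 := by
      have : p.val + 1 ≤ n + 1 := p.isLt
      exact_mod_cast this
    constructor
    · nlinarith
    · nlinarith
  · rintro ⟨hx0, hx1⟩
    set y := x * ((n:ℝ)+1) with hy
    have hy0 : 0 < y := by positivity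
    have hyn : y ≤ (n:ℝ)+1 := by nlinarith
    set k := ⌈y⌉₊ with hk
    have hk1 : 1 ≤ k := Nat.one_le_ceil_iff.mpr hy0
    have hkn : k ≤ n+1 := by
      exact Nat.ceil_le.mpr (by push_cast; exact hyn)
    refine ⟨⟨k-1, by omega⟩, ?_, ?_⟩
    · have hcast : ((k-1 : ℕ) : ℝ) = (k:ℝ) - 1 := by
        have : ((k-1 : ℕ) : ℝ) + 1 = (k:ℝ) := by
          have : (k-1) + 1 = k := by omega
          exact_mod_cast congrArg (Nat.cast : ℕ → ℝ) this
        linarith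
    
      have hlt : (k:ℝ) - 1 < y := by
        have := Nat.ceil_lt_add_one hy0.le
        rw [← hk] at this
        linarith
      show ((⟨k-1, by omega⟩ : Fin (n+1)).val : ℝ) * h < x
      simp only [hcast]
      calc ((k:ℝ)-1) * h < y * h := by exact mul_lt_mul_of_pos_right hlt hp
        _ = x := by rw [hy, hh]; field_simp
    · have hcast : ((k-1 : ℕ) : ℝ) = (k:ℝ) - 1 := by
        have h2 : (k-1) + 1 = k := by omega
        have : ((k-1 : ℕ) : ℝ) + 1 = (k:ℝ) := by exact_mod_cast congrArg (Nat.cast : ℕ → ℝ) h2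
        linarith
      have hle : y ≤ (k:ℝ) := Nat.le_ceil y
      show x ≤ (((⟨k-1, by omega⟩ : Fin (n+1)).val : ℝ) + 1) * h
      simp only [hcast]
      calc x = y * h := by rw [hy, hh]; field_simp
        _ ≤ (k:ℝ) * h := mul_le_mul_of_nonneg_right hle hp.le
        _ = ((k:ℝ) - 1 + 1) * h := by ring

lemma cube_int (n : ℕ) (h : ℝ) (w : Fin (n+1) × Fin (n+1) × Fin (n+1) → ℝ)
    (φ : Fin n → ℝ → ℝ) (hφc : ∀ i, Continuous (φ i))
    (nSf : ℝ × ℝ × ℝ → ℝ)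
    (hnSf : ∀ (p q r : Fin (n + 1)) (x y z : ℝ),
      (p.val : ℝ) * h < x → x < ((p.val : ℝ) + 1) * h →
      (q.val : ℝ) * h < y → y < ((q.val : ℝ) + 1) * h →
      (r.val : ℝ) * h < z → z < ((r.val : ℝ) + 1) * h →
      nSf (x, y, z) = w (p, q, r))
    (c : Fin (n+1) × Fin (n+1) × Fin (n+1)) (i j k i' j' k' : Fin n) :
    IntegrableOn (fun z : ℝ×ℝ×ℝ => nSf z * ((φ i z.1 * φ j z.2.1 * φ k z.2.2) *
        (φ i' z.1 * φ j' z.2.1 * φ k' z.2.2))) (B3 n h c) volume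
    ∧ (∫ z in B3 n h c, nSf z * ((φ i z.1 * φ j z.2.1 * φ k z.2.2) *
        (φ i' z.1 * φ j' z.2.1 * φ k' z.2.2)))
      = w c * ((∫ x in Bset n h c.1, φ i x * φ i' x) *
          ((∫ y in Bset n h c.2.1, φ j y * φ j' y) * (∫ z in Bset n h c.2.2, φ k z * φ k' z))) := by
  obtain ⟨p, q, r⟩ := c
  set F : ℝ×ℝ×ℝ → ℝ := fun z => nSf z * ((φ i z.1 * φ j z.2.1 * φ k z.2.2) *
      (φ i' z.1 * φ j' z.2.1 * φ k' z.2.2)) with hF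
  set G : ℝ×ℝ×ℝ → ℝ := fun z => (φ i z.1 * φ i' z.1) *
      ((φ j z.2.1 * φ j' z.2.1) * (φ k z.2.2 * φ k' z.2.2)) with hG
  set F' : ℝ×ℝ×ℝ → ℝ := fun z => w (p,q,r) * G z with hF'
  have hGc : Continuous G := by
    apply Continuous.mul
    · exact ((hφc i).comp continuous_fst).mul ((hφc i').comp continuous_fst)
    · apply Continuous.mul
      · exact ((hφc j).comp (continuous_fst.comp continuous_snd)).mul
          ((hφc j').comp (continuous_fst.comp continuous_snd))
      · exact ((hφc k).comp (continuous_snd.comp continuous_snd)).mul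
          ((hφc k').comp (continuous_snd.comp continuous_snd))
  -- a.e. equality on the cube
  have hae : F =ᵐ[volume.restrict (B3 n h (p,q,r))] F' := by
    rw [Filter.EventuallyEq, MeasureTheory.ae_iff]
    rw [MeasureTheory.Measure.restrict_apply' (B3_meas n h (p,q,r))]
    have hsub : {z : ℝ×ℝ×ℝ | ¬ F z = F' z} ∩ B3 n h (p,q,r) ⊆
        {z : ℝ×ℝ×ℝ | z.1 = ((p.val:ℝ)+1)*h} ∪
        ({z : ℝ×ℝ×ℝ | z.2.1 = ((q.val:ℝ)+1)*h} ∪ {z : ℝ×ℝ×ℝ | z.2.2 = ((r.val:ℝ)+1)*h}) := by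
      rintro z ⟨hzne, hz1, hz2, hz3⟩
      simp only [Set.mem_setOf_eq] at hzne ⊢
      by_contra hcon
      simp only [Set.mem_union, Set.mem_setOf_eq, not_or] at hcon
      obtain ⟨e1, e2, e3⟩ := hcon
      apply hzne
      have hval : nSf z = w (p,q,r) := by
        have := hnSf p q r z.1 z.2.1 z.2.2 hz1.1 (lt_of_le_of_ne hz1.2 e1)
          hz2.1 (lt_of_le_of_ne hz2.2 e2) hz3.1 (lt_of_le_of_ne hz3.2 e3)
        exact this
      simp only [hF, hF', hG]
      rw [hval]
      ring
    exact measure_mono_null hsub (measure_union_null (plane1_null _)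
      (measure_union_null (plane2_null _) (plane3_null _)))
  -- integrability
  have hintF' : IntegrableOn F' (B3 n h (p,q,r)) volume := by
    apply Integrable.const_mul
    have hK : IsCompact ((Set.Icc ((p.val:ℝ)*h) (((p.val:ℝ)+1)*h)) ×ˢ
        ((Set.Icc ((q.val:ℝ)*h) (((q.val:ℝ)+1)*h)) ×ˢ (Set.Icc ((r.val:ℝ)*h) (((r.val:ℝ)+1)*h)))) :=
      isCompact_Icc.prod (isCompact_Icc.prod isCompact_Icc)
    apply IntegrableOn.mono_set (hGc.continuousOn.integrableOn_compact hK)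
    exact Set.prod_mono Set.Ioc_subset_Icc_self
      (Set.prod_mono Set.Ioc_subset_Icc_self Set.Ioc_subset_Icc_self)
  have hintF : IntegrableOn F (B3 n h (p,q,r)) volume := hintF'.congr hae.symm
  refine ⟨hintF, ?_⟩
  rw [show (∫ z in B3 n h (p,q,r), F z) = ∫ z in B3 n h (p,q,r), F' z from integral_congr_ae hae]
  rw [hF']
  rw [MeasureTheory.integral_const_mul]
  congr 1
  -- Fubini
  have inner : (∫ y in (Bset n h q) ×ˢ (Bset n h r),
      (fun s => φ j s * φ j' s) y.1 * (fun t => φ k t * φ k' t) y.2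
        ∂((volume : Measure ℝ).prod (volume : Measure ℝ)))
      = (∫ y in Bset n h q, φ j y * φ j' y) * (∫ z in Bset n h r, φ k z * φ k' z) :=
    MeasureTheory.setIntegral_prod_mul (fun s => φ j s * φ j' s) (fun t => φ k t * φ k' t)
      (Bset n h q) (Bset n h r)
  have outer : (∫ z in (Bset n h p) ×ˢ ((Bset n h q) ×ˢ (Bset n h r)),
      (fun x => φ i x * φ i' x) z.1 *
        (fun y => (φ j y.1 * φ j' y.1) * (φ k y.2 * φ k' y.2)) z.2
        ∂((volume : Measure ℝ).prod ((volume : Measure ℝ).prod (volume : Measure ℝ))))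
      = (∫ x in Bset n h p, φ i x * φ i' x) *
        (∫ y in (Bset n h q) ×ˢ (Bset n h r),
          (fun y : ℝ×ℝ => (φ j y.1 * φ j' y.1) * (φ k y.2 * φ k' y.2)) y
            ∂((volume : Measure ℝ).prod (volume : Measure ℝ))) :=
    MeasureTheory.setIntegral_prod_mul (fun x => φ i x * φ i' x)
      (fun y : ℝ×ℝ => (φ j y.1 * φ j' y.1) * (φ k y.2 * φ k' y.2))
      (Bset n h p) ((Bset n h q) ×ˢ (Bset n h r))
  show (∫ z in (Bset n h p) ×ˢ ((Bset n h q) ×ˢ (Bset n h r)),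
      (fun x => φ i x * φ i' x) z.1 *
        (fun y => (φ j y.1 * φ j' y.1) * (φ k y.2 * φ k' y.2)) z.2
        ∂((volume : Measure ℝ).prod ((volume : Measure ℝ).prod (volume : Measure ℝ)))) = _
  rw [outer]
  congr 1


lemma phi_cont (n : ℕ) (h : ℝ) (φ : Fin n → ℝ → ℝ)
    (hφ : ∀ (i : Fin n) (x : ℝ), φ i x = max 0 (1 - |x / h - ((i.val : ℝ) + 1)|)) (i : Fin n) :
    Continuous (φ i) := by
  have : φ i = fun x => max 0 (1 - |x / h - ((i.val : ℝ) + 1)|) := funext (hφ i)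
  rw [this]
  exact continuous_const.max
    ((continuous_const.sub (((continuous_id.div_const h).sub continuous_const).abs)))

lemma Bset_disj (n : ℕ) (h : ℝ) (hp : 0 < h) {p p' : Fin (n+1)} (hne : p ≠ p') :
    Disjoint (Bset n h p) (Bset n h p') := by
  have hcase : p.val + 1 ≤ p'.val ∨ p'.val + 1 ≤ p.val := by
    have := Fin.val_ne_of_ne hne
    omega
  rw [Bset, Bset, Set.Ioc_disjoint_Ioc]
  rcases hcase with hc | hc
  · have : ((p.val:ℝ)+1) ≤ (p'.val:ℝ) := by exact_mod_cast hc
    refine le_trans (min_le_left _ _) (le_trans ?_ (le_max_right _ _))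
    nlinarith
  · have : ((p'.val:ℝ)+1) ≤ (p.val:ℝ) := by exact_mod_cast hc
    refine le_trans (min_le_right _ _) (le_trans ?_ (le_max_left _ _))
    nlinarith

lemma B3_disj (n : ℕ) (h : ℝ) (hp : 0 < h) :
    Pairwise (Function.onFun Disjoint (fun c => B3 n h c)) := by
  intro c c' hne
  have hcase : c.1 ≠ c'.1 ∨ c.2.1 ≠ c'.2.1 ∨ c.2.2 ≠ c'.2.2 := by
    by_contra hcc
    push_neg at hcc
    exact hne (Prod.ext hcc.1 (Prod.ext hcc.2.1 hcc.2.2))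
  apply Set.disjoint_left.mpr
  rintro z ⟨h1, h2, h3⟩ ⟨h1', h2', h3'⟩
  rcases hcase with hc | hc | hc
  · exact Set.disjoint_left.mp (Bset_disj n h hp hc) h1 h1'
  · exact Set.disjoint_left.mp (Bset_disj n h hp hc) h2 h2'
  · exact Set.disjoint_left.mp (Bset_disj n h hp hc) h3 h3'

lemma cover3 (n : ℕ) (h : ℝ) (hh : h = 1/((n:ℝ)+1)) :
    (⋃ c : Fin (n+1) × Fin (n+1) × Fin (n+1), B3 n h c)
      = Set.Ioc (0:ℝ) 1 ×ˢ (Set.Ioc (0:ℝ) 1 ×ˢ Set.Ioc (0:ℝ) 1) := by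
  ext z
  simp only [Set.mem_iUnion, B3, Set.mem_prod]
  constructor
  · rintro ⟨c, h1, h2, h3⟩
    refine ⟨?_, ?_, ?_⟩
    · have := Set.mem_iUnion.mpr ⟨c.1, h1⟩
      rwa [Ioc_cover n h hh] at this
    · have := Set.mem_iUnion.mpr ⟨c.2.1, h2⟩
      rwa [Ioc_cover n h hh] at this
    · have := Set.mem_iUnion.mpr ⟨c.2.2, h3⟩
      rwa [Ioc_cover n h hh] at this
  · rintro ⟨m1, m2, m3⟩
    rw [← Ioc_cover n h hh] at m1 m2 m3
    obtain ⟨p, hp1⟩ := Set.mem_iUnion.mp m1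
    obtain ⟨q, hq1⟩ := Set.mem_iUnion.mp m2
    obtain ⟨r, hr1⟩ := Set.mem_iUnion.mp m3
    exact ⟨(p, q, r), hp1, hq1, hr1⟩

lemma T3ae :
    ((Set.Icc (0:ℝ) 1) ×ˢ ((Set.Icc (0:ℝ) 1) ×ˢ (Set.Icc (0:ℝ) 1)) : Set (ℝ×ℝ×ℝ))
      =ᵐ[volume] (Set.Ioc (0:ℝ) 1 ×ˢ (Set.Ioc (0:ℝ) 1 ×ˢ Set.Ioc (0:ℝ) 1)) := by
  rw [MeasureTheory.ae_eq_set]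
  constructor
  · refine measure_mono_null (?_ :
      _ ⊆ {z : ℝ×ℝ×ℝ | z.1 = 0} ∪ ({z : ℝ×ℝ×ℝ | z.2.1 = 0} ∪ {z : ℝ×ℝ×ℝ | z.2.2 = 0}))
      (measure_union_null (plane1_null 0)
        (measure_union_null (plane2_null 0) (plane3_null 0)))
    rintro z ⟨⟨m1, m2, m3⟩, hn⟩
    simp only [Set.mem_Icc] at m1 m2 m3
    simp only [Set.mem_union, Set.mem_setOf_eq]
    by_cases e1 : z.1 = 0
    · exact Or.inl e1
    · by_cases e2 : z.2.1 = 0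
      · exact Or.inr (Or.inl e2)
      · by_cases e3 : z.2.2 = 0
        · exact Or.inr (Or.inr e3)
        · exfalso
          apply hn
          refine ⟨?_, ?_, ?_⟩ <;> simp only [Set.mem_Ioc] <;>
            constructor <;> first
              | exact lt_of_le_of_ne (by tauto) (by intro e; first | exact e1 e.symm | exact e2 e.symm | exact e3 e.symm)
              | tauto
  · refine measure_mono_null (?_ : _ ⊆ (∅ : Set (ℝ×ℝ×ℝ))) measure_empty
    rintro z ⟨⟨m1, m2, m3⟩, hn⟩
    exact absurd ⟨Set.Ioc_subset_Icc_self m1,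
      Set.Ioc_subset_Icc_self m2, Set.Ioc_subset_Icc_self m3⟩ hn

lemma Centry (n : ℕ) (h : ℝ) (hh : h = 1/((n:ℝ)+1))
    (φ : Fin n → ℝ → ℝ)
    (hφ : ∀ (i : Fin n) (x : ℝ), φ i x = max 0 (1 - |x / h - ((i.val : ℝ) + 1)|))
    (w : Fin (n+1) × Fin (n+1) × Fin (n+1) → ℝ)
    (nSf : ℝ × ℝ × ℝ → ℝ)
    (hnSf : ∀ (p q r : Fin (n + 1)) (x y z : ℝ),
      (p.val : ℝ) * h < x → x < ((p.val : ℝ) + 1) * h →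
      (q.val : ℝ) * h < y → y < ((q.val : ℝ) + 1) * h →
      (r.val : ℝ) * h < z → z < ((r.val : ℝ) + 1) * h →
      nSf (x, y, z) = w (p, q, r))
    (i j k i' j' k' : Fin n) :
    (∫ z in (Set.Icc (0:ℝ) 1) ×ˢ (Set.Icc (0:ℝ) 1) ×ˢ (Set.Icc (0:ℝ) 1),
        nSf z * ((φ i z.1 * φ j z.2.1 * φ k z.2.2) * (φ i' z.1 * φ j' z.2.1 * φ k' z.2.2)))
    = ∑ c : Fin (n+1) × Fin (n+1) × Fin (n+1),
        w c * (mval n h c.1 i i' * (mval n h c.2.1 j j' * mval n h c.2.2 k k')) := by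
  have hp : 0 < h := by rw [hh]; positivity
  have hφc := phi_cont n h φ hφ
  rw [MeasureTheory.setIntegral_congr_set T3ae]
  rw [← cover3 n h hh]
  rw [MeasureTheory.integral_iUnion_fintype (B3_meas n h) (B3_disj n h hp)
    (fun c => (cube_int n h w φ hφc nSf hnSf c i j k i' j' k').1)]
  refine Finset.sum_congr rfl (fun c _ => ?_)
  rw [(cube_int n h w φ hφc nSf hnSf c i j k i' j' k').2]
  simp only [Bset]
  rw [oneD n h hp φ hφ c.1 i i', oneD n h hp φ hφ c.2.1 j j', oneD n h hp φ hφ c.2.2 k k']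
section PSD
variable {ι : Type*} [Fintype ι] [DecidableEq ι]

lemma psd_vecMulVec (u : ι → ℝ) : PosSemidef (Matrix.of fun i j => u i * u j) := by
  refine Matrix.PosSemidef.of_dotProduct_mulVec_nonneg ?_ ?_
  · ext i j
    simp [Matrix.conjTranspose_apply, mul_comm]
  · intro x
    have : (star x) ⬝ᵥ ((Matrix.of fun i j => u i * u j) *ᵥ x) = (∑ i, u i * x i)^2 := by
      simp only [star_trivial, dotProduct, Matrix.mulVec, Matrix.of_apply]
      rw [sq, Finset.sum_mul_sum]
      refine Finset.sum_congr rfl (fun i _ => ?_)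
      rw [Finset.mul_sum]
      exact Finset.sum_congr rfl (fun j _ => by ring)
    rw [this]
    exact sq_nonneg _

lemma psd_diag_01 (u : ι → ℝ) (h01 : ∀ i, u i = 0 ∨ u i = 1) :
    PosSemidef (Matrix.diagonal u) :=
  Matrix.posSemidef_diagonal_iff.mpr (fun i => by rcases h01 i with e | e <;> rw [e] <;> norm_num)

lemma psd_smul {M : Matrix ι ι ℝ} (hM : PosSemidef M) {c : ℝ} (hc : 0 ≤ c) :
    PosSemidef (c • M) := by
  refine Matrix.PosSemidef.of_dotProduct_mulVec_nonneg ?_ ?_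
  · ext i j
    have := congrFun (congrFun hM.1 i) j
    simp only [Matrix.conjTranspose_apply, Matrix.smul_apply, star_trivial] at this ⊢
    rw [this]
  · intro x
    rw [Matrix.smul_mulVec, dotProduct_smul, smul_eq_mul]
    exact mul_nonneg hc (hM.dotProduct_mulVec_nonneg x)

lemma psd_2diag_sub (u : ι → ℝ) (h01 : ∀ i, u i = 0 ∨ u i = 1)
    (hsum : ∑ i, u i ≤ 2) :
    PosSemidef ((2:ℝ) • Matrix.diagonal u - Matrix.of fun i j => u i * u j) := by
  have hsq : ∀ i, u i * u i = u i := fun i => by rcases h01 i with e | e <;> rw [e] <;> norm_num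
  have hnn : ∀ i, 0 ≤ u i := fun i => by rcases h01 i with e | e <;> rw [e] <;> norm_num
  refine Matrix.PosSemidef.of_dotProduct_mulVec_nonneg ?_ ?_
  · ext i j
    simp only [Matrix.conjTranspose_apply, Matrix.sub_apply, Matrix.smul_apply,
      Matrix.diagonal_apply, Matrix.of_apply, star_trivial, smul_eq_mul]
    by_cases e : i = j
    · subst e; simp [mul_comm]
    · rw [if_neg e, if_neg (Ne.symm e)]; ring
  · intro x
    rw [Matrix.sub_mulVec, dotProduct_sub, Matrix.smul_mulVec,
      dotProduct_smul, smul_eq_mul, sub_nonneg]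
    have hdiag : (star x) ⬝ᵥ (Matrix.diagonal u *ᵥ x) = ∑ i, u i * x i ^ 2 := by
      simp only [star_trivial, dotProduct, Matrix.mulVec_diagonal]
      exact Finset.sum_congr rfl (fun i _ => by ring)
    have hout : (star x) ⬝ᵥ ((Matrix.of fun i j => u i * u j) *ᵥ x) = (∑ i, u i * x i)^2 := by
      simp only [star_trivial, dotProduct, Matrix.mulVec, Matrix.of_apply]
      rw [sq, Finset.sum_mul_sum]
      refine Finset.sum_congr rfl (fun i _ => ?_)
      rw [Finset.mul_sum]
      exact Finset.sum_congr rfl (fun j _ => by ring)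
    rw [hdiag, hout]
    have hCS := Finset.sum_mul_sq_le_sq_mul_sq Finset.univ u (fun i => u i * x i)
    have e1 : ∑ i, u i * (u i * x i) = ∑ i, u i * x i := by
      refine Finset.sum_congr rfl (fun i _ => ?_)
      rw [← mul_assoc, hsq i]
    have e2 : ∑ i, (u i)^2 = ∑ i, u i := by
      refine Finset.sum_congr rfl (fun i _ => by rw [sq, hsq i])
    have e3 : ∑ i, (u i * x i)^2 = ∑ i, u i * x i ^2 := by
      refine Finset.sum_congr rfl (fun i _ => ?_)
      rw [mul_pow, sq (u i), hsq i]
    rw [e1, e2, e3] at hCS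
    have hnn2 : 0 ≤ ∑ i, u i * x i ^ 2 :=
      Finset.sum_nonneg (fun i _ => mul_nonneg (hnn i) (sq_nonneg _))
    nlinarith

lemma psd_kron {κ : Type*} [Fintype κ] [DecidableEq κ]
    {A : Matrix ι ι ℝ} {B : Matrix κ κ ℝ} (hA : PosSemidef A) (hB : PosSemidef B) :
    PosSemidef (A ⊗ₖ B) := by
  exact hA.kronecker hB

lemma psd_qform {M : Matrix ι ι ℝ} (hM : PosSemidef M) (x : ι → ℝ) :
    0 ≤ x ⬝ᵥ M *ᵥ x := by
  have := hM.dotProduct_mulVec_nonneg x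
  rwa [star_trivial] at this

lemma qform_diag (d : ι → ℝ) (v : ι → ℝ) :
    v ⬝ᵥ (Matrix.diagonal d *ᵥ v) = ∑ i, d i * v i ^ 2 := by
  simp only [dotProduct, Matrix.mulVec_diagonal]
  exact Finset.sum_congr rfl (fun i _ => by ring)

end PSD

section PSD2
variable {ι : Type*} [Fintype ι] [DecidableEq ι]

lemma sandwich (u1 u2 u3 : ι → ℝ)
    (h011 : ∀ i, u1 i = 0 ∨ u1 i = 1) (h012 : ∀ i, u2 i = 0 ∨ u2 i = 1)
    (h013 : ∀ i, u3 i = 0 ∨ u3 i = 1)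
    (hs1 : ∑ i, u1 i ≤ 2) (hs2 : ∑ i, u2 i ≤ 2) (hs3 : ∑ i, u3 i ≤ 2)
    (v : ι × ι × ι → ℝ) :
    v ⬝ᵥ ((Matrix.diagonal u1 ⊗ₖ (Matrix.diagonal u2 ⊗ₖ Matrix.diagonal u3)) *ᵥ v) ≤
      v ⬝ᵥ ((((Matrix.of fun i j => u1 i * u1 j) + Matrix.diagonal u1) ⊗ₖ
        (((Matrix.of fun i j => u2 i * u2 j) + Matrix.diagonal u2) ⊗ₖ
         ((Matrix.of fun i j => u3 i * u3 j) + Matrix.diagonal u3))) *ᵥ v) ∧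
    v ⬝ᵥ ((((Matrix.of fun i j => u1 i * u1 j) + Matrix.diagonal u1) ⊗ₖ
        (((Matrix.of fun i j => u2 i * u2 j) + Matrix.diagonal u2) ⊗ₖ
         ((Matrix.of fun i j => u3 i * u3 j) + Matrix.diagonal u3))) *ᵥ v) ≤
      27 * (v ⬝ᵥ ((Matrix.diagonal u1 ⊗ₖ (Matrix.diagonal u2 ⊗ₖ Matrix.diagonal u3)) *ᵥ v)) := by
  set U1 : Matrix ι ι ℝ := Matrix.of fun i j => u1 i * u1 j with hU1
  set U2 : Matrix ι ι ℝ := Matrix.of fun i j => u2 i * u2 j with hU2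
  set U3 : Matrix ι ι ℝ := Matrix.of fun i j => u3 i * u3 j with hU3
  set D1 : Matrix ι ι ℝ := Matrix.diagonal u1 with hD1
  set D2 : Matrix ι ι ℝ := Matrix.diagonal u2 with hD2
  set D3 : Matrix ι ι ℝ := Matrix.diagonal u3 with hD3
  have pU1 := psd_vecMulVec u1
  have pU2 := psd_vecMulVec u2
  have pU3 := psd_vecMulVec u3
  have pD1 := psd_diag_01 u1 h011
  have pD2 := psd_diag_01 u2 h012
  have pD3 := psd_diag_01 u3 h013
  have pA1 : PosSemidef (U1 + D1) := pU1.add pD1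
  have pA2 : PosSemidef (U2 + D2) := pU2.add pD2
  have pA3 : PosSemidef (U3 + D3) := pU3.add pD3
  have pV1 : PosSemidef ((2:ℝ) • D1 - U1) := psd_2diag_sub u1 h011 hs1
  have pV2 : PosSemidef ((2:ℝ) • D2 - U2) := psd_2diag_sub u2 h012 hs2
  have pV3 : PosSemidef ((2:ℝ) • D3 - U3) := psd_2diag_sub u3 h013 hs3
  have p3D2 : PosSemidef ((3:ℝ) • D2) := psd_smul pD2 (by norm_num)
  have p3D3 : PosSemidef ((3:ℝ) • D3) := psd_smul pD3 (by norm_num)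
  constructor
  · have identity1 : (U1 + D1) ⊗ₖ ((U2 + D2) ⊗ₖ (U3 + D3)) =
        D1 ⊗ₖ (D2 ⊗ₖ D3) + (U1 ⊗ₖ ((U2 + D2) ⊗ₖ (U3 + D3)) +
          (D1 ⊗ₖ (U2 ⊗ₖ (U3 + D3)) + D1 ⊗ₖ (D2 ⊗ₖ U3))) := by
      simp only [Matrix.add_kronecker, Matrix.kronecker_add]
      abel
    rw [identity1, Matrix.add_mulVec, dotProduct_add]
    have : 0 ≤ v ⬝ᵥ ((U1 ⊗ₖ ((U2 + D2) ⊗ₖ (U3 + D3)) +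
        (D1 ⊗ₖ (U2 ⊗ₖ (U3 + D3)) + D1 ⊗ₖ (D2 ⊗ₖ U3))) *ᵥ v) := by
      rw [Matrix.add_mulVec, dotProduct_add, Matrix.add_mulVec, dotProduct_add]
      have q1 := psd_qform (psd_kron pU1 (psd_kron pA2 pA3)) v
      have q2 := psd_qform (psd_kron pD1 (psd_kron pU2 pA3)) v
      have q3 := psd_qform (psd_kron pD1 (psd_kron pD2 pU3)) v
      linarith
    linarith
  · have identity2 : (27:ℝ) • (D1 ⊗ₖ (D2 ⊗ₖ D3)) =
        (U1 + D1) ⊗ₖ ((U2 + D2) ⊗ₖ (U3 + D3)) +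
          (((2:ℝ) • D1 - U1) ⊗ₖ (((3:ℝ) • D2) ⊗ₖ ((3:ℝ) • D3)) +
            ((U1 + D1) ⊗ₖ (((2:ℝ) • D2 - U2) ⊗ₖ ((3:ℝ) • D3)) +
             (U1 + D1) ⊗ₖ ((U2 + D2) ⊗ₖ ((2:ℝ) • D3 - U3)))) := by
      ext ⟨a, b, c⟩ ⟨a', b', c'⟩
      simp only [Matrix.kroneckerMap_apply, Matrix.add_apply, Matrix.sub_apply,
        Matrix.smul_apply, Matrix.diagonal_apply, Matrix.of_apply, smul_eq_mul, hU1, hU2, hU3,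
        hD1, hD2, hD3]
      ring
    have hq : (27:ℝ) * (v ⬝ᵥ ((D1 ⊗ₖ (D2 ⊗ₖ D3)) *ᵥ v)) =
        v ⬝ᵥ (((27:ℝ) • (D1 ⊗ₖ (D2 ⊗ₖ D3))) *ᵥ v) := by
      rw [Matrix.smul_mulVec, dotProduct_smul, smul_eq_mul]
    rw [hq, identity2, Matrix.add_mulVec, dotProduct_add]
    have : 0 ≤ v ⬝ᵥ ((((2:ℝ) • D1 - U1) ⊗ₖ (((3:ℝ) • D2) ⊗ₖ ((3:ℝ) • D3)) +
        ((U1 + D1) ⊗ₖ (((2:ℝ) • D2 - U2) ⊗ₖ ((3:ℝ) • D3)) +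
         (U1 + D1) ⊗ₖ ((U2 + D2) ⊗ₖ ((2:ℝ) • D3 - U3)))) *ᵥ v) := by
      rw [Matrix.add_mulVec, dotProduct_add, Matrix.add_mulVec, dotProduct_add]
      have q1 := psd_qform (psd_kron pV1 (psd_kron p3D2 p3D3)) v
      have q2 := psd_qform (psd_kron pA1 (psd_kron pV2 p3D3)) v
      have q3 := psd_qform (psd_kron pA1 (psd_kron pA2 pV3)) v
      linarith
    linarith

end PSD2

lemma uInd_01 (n : ℕ) (p : Fin (n+1)) (i : Fin n) : uInd n p i = 0 ∨ uInd n p i = 1 := by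
  unfold uInd; split_ifs <;> simp

lemma uInd_nonneg (n : ℕ) (p : Fin (n+1)) (i : Fin n) : 0 ≤ uInd n p i := by
  rcases uInd_01 n p i with e | e <;> rw [e] <;> norm_num

lemma sum_ind_le_one (n m : ℕ) : (∑ i : Fin n, if i.val = m then (1:ℝ) else 0) ≤ 1 := by
  by_cases hm : m < n
  · have : ∀ i : Fin n, (i.val = m) = (i = ⟨m, hm⟩) := by
      intro i
      apply propext
      constructor
      · intro e; exact Fin.ext e
      · intro e; rw [e]
    simp_rw [this]
    rw [Finset.sum_ite_eq' Finset.univ (⟨m, hm⟩ : Fin n) (fun _ => (1:ℝ))]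
    simp
  · have : ∀ i : Fin n, ¬ (i.val = m) := fun i e => hm (e ▸ i.isLt)
    rw [Finset.sum_congr rfl (fun i _ => if_neg (this i))]
    simp

lemma sum_uInd_le (n : ℕ) (p : Fin (n+1)) : ∑ i : Fin n, uInd n p i ≤ 2 := by
  have hle : ∀ i : Fin n, uInd n p i ≤
      (if i.val = p.val then (1:ℝ) else 0) + (if i.val = p.val - 1 then (1:ℝ) else 0) := by
    intro i
    unfold uInd
    split_ifs with h1 h2 h3 h2 h3 <;> first | (exfalso; omega) | norm_num
  calc ∑ i : Fin n, uInd n p i ≤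
      ∑ i : Fin n, ((if i.val = p.val then (1:ℝ) else 0) + (if i.val = p.val - 1 then (1:ℝ) else 0)) :=
        Finset.sum_le_sum (fun i _ => hle i)
    _ = (∑ i : Fin n, if i.val = p.val then (1:ℝ) else 0) +
        (∑ i : Fin n, if i.val = p.val - 1 then (1:ℝ) else 0) := Finset.sum_add_distrib
    _ ≤ 1 + 1 := add_le_add (sum_ind_le_one n p.val) (sum_ind_le_one n (p.val - 1))
    _ = 2 := by norm_num

lemma sum_uInd_eq (n : ℕ) (i : Fin n) : ∑ p : Fin (n+1), uInd n p i = 2 := by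
  have key : ∀ p : Fin (n+1), uInd n p i =
      (if p = ⟨i.val, by omega⟩ then (1:ℝ) else 0) + (if p = ⟨i.val + 1, by omega⟩ then (1:ℝ) else 0) := by
    intro p
    unfold uInd
    by_cases e1 : p = (⟨i.val, by omega⟩ : Fin (n+1))
    · subst e1
      rw [if_pos (Or.inl rfl), if_pos rfl, if_neg (by simp [Fin.ext_iff])]
      norm_num
    · by_cases e2 : p = (⟨i.val + 1, by omega⟩ : Fin (n+1))
      · subst e2
        rw [if_pos (Or.inr rfl), if_neg e1, if_pos rfl]
        norm_num
      · rw [if_neg ?_, if_neg e1, if_neg e2]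
        · norm_num
        · rintro (e | e)
          · exact e1 (Fin.ext e)
          · exact e2 (Fin.ext e)
  rw [Finset.sum_congr rfl (fun p _ => key p), Finset.sum_add_distrib,
    Finset.sum_ite_eq' Finset.univ (⟨i.val, by omega⟩ : Fin (n+1)) (fun _ => (1:ℝ)),
    Finset.sum_ite_eq' Finset.univ (⟨i.val + 1, by omega⟩ : Fin (n+1)) (fun _ => (1:ℝ))]
  norm_num

lemma Kc_bounds (n : ℕ) (h : ℝ) (hp : 0 < h) (c : Fin (n+1) × Fin (n+1) × Fin (n+1))
    (v : Fin n × Fin n × Fin n → ℝ) :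
    (h/6)^3 * (∑ N : Fin n × Fin n × Fin n,
        (uInd n c.1 N.1 * (uInd n c.2.1 N.2.1 * uInd n c.2.2 N.2.2)) * v N ^ 2)
      ≤ v ⬝ᵥ ((Matrix.of fun N N' : Fin n × Fin n × Fin n =>
          mval n h c.1 N.1 N'.1 * (mval n h c.2.1 N.2.1 N'.2.1 * mval n h c.2.2 N.2.2 N'.2.2)) *ᵥ v)
    ∧ v ⬝ᵥ ((Matrix.of fun N N' : Fin n × Fin n × Fin n =>
          mval n h c.1 N.1 N'.1 * (mval n h c.2.1 N.2.1 N'.2.1 * mval n h c.2.2 N.2.2 N'.2.2)) *ᵥ v)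
      ≤ 27 * (h/6)^3 * (∑ N : Fin n × Fin n × Fin n,
          (uInd n c.1 N.1 * (uInd n c.2.1 N.2.1 * uInd n c.2.2 N.2.2)) * v N ^ 2) := by
  obtain ⟨p, q, r⟩ := c
  set u1 := uInd n p with hu1
  set u2 := uInd n q with hu2
  set u3 := uInd n r with hu3
  have hM : (Matrix.of fun N N' : Fin n × Fin n × Fin n =>
      mval n h p N.1 N'.1 * (mval n h q N.2.1 N'.2.1 * mval n h r N.2.2 N'.2.2))
      = ((h/6)^3) • ((((Matrix.of fun i j => u1 i * u1 j) + Matrix.diagonal u1) ⊗ₖ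
        (((Matrix.of fun i j => u2 i * u2 j) + Matrix.diagonal u2) ⊗ₖ
         ((Matrix.of fun i j => u3 i * u3 j) + Matrix.diagonal u3)))) := by
    ext ⟨i, j, k⟩ ⟨i', j', k'⟩
    simp only [Matrix.of_apply, Matrix.smul_apply, Matrix.kroneckerMap_apply, Matrix.add_apply,
      Matrix.diagonal_apply, smul_eq_mul, mval, hu1, hu2, hu3]
    ring
  have hD : (Matrix.diagonal u1 ⊗ₖ (Matrix.diagonal u2 ⊗ₖ Matrix.diagonal u3))
      = Matrix.diagonal (fun N : Fin n × Fin n × Fin n => u1 N.1 * (u2 N.2.1 * u3 N.2.2)) := by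
    rw [Matrix.diagonal_kronecker_diagonal, Matrix.diagonal_kronecker_diagonal]
  have hqD : v ⬝ᵥ ((Matrix.diagonal u1 ⊗ₖ (Matrix.diagonal u2 ⊗ₖ Matrix.diagonal u3)) *ᵥ v)
      = ∑ N : Fin n × Fin n × Fin n, (u1 N.1 * (u2 N.2.1 * u3 N.2.2)) * v N ^ 2 := by
    rw [hD, qform_diag]
  have hsand := sandwich u1 u2 u3 (uInd_01 n p) (uInd_01 n q) (uInd_01 n r)
    (sum_uInd_le n p) (sum_uInd_le n q) (sum_uInd_le n r) v
  have hscale : v ⬝ᵥ ((Matrix.of fun N N' : Fin n × Fin n × Fin n =>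
      mval n h p N.1 N'.1 * (mval n h q N.2.1 N'.2.1 * mval n h r N.2.2 N'.2.2)) *ᵥ v)
      = (h/6)^3 * (v ⬝ᵥ ((((Matrix.of fun i j => u1 i * u1 j) + Matrix.diagonal u1) ⊗ₖ
        (((Matrix.of fun i j => u2 i * u2 j) + Matrix.diagonal u2) ⊗ₖ
         ((Matrix.of fun i j => u3 i * u3 j) + Matrix.diagonal u3))) *ᵥ v)) := by
    rw [hM, Matrix.smul_mulVec, dotProduct_smul, smul_eq_mul]
  have hpow : (0:ℝ) < (h/6)^3 := by positivity
  constructor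
  · rw [hscale, ← hqD]
    have := mul_le_mul_of_nonneg_left hsand.1 hpow.le
    linarith
  · rw [hscale, ← hqD]
    have := mul_le_mul_of_nonneg_left hsand.2 hpow.le
    linarith

lemma mval_zero_right (n : ℕ) (h : ℝ) (p : Fin (n+1)) (i i' : Fin n)
    (hni : ¬(p.val = i'.val ∨ p.val = i'.val + 1)) : mval n h p i i' = 0 := by
  unfold mval uInd
  rw [if_neg hni]
  by_cases e : i = i'
  · subst e; rw [if_pos rfl, if_neg hni]; ring
  · rw [if_neg e]; ring

/-- **Block structure and spectral bounds of the fission matrix `C`.** -/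
theorem stmt7 (n : ℕ) (hn : 1 ≤ n) (h : ℝ) (hh : h = 1 / ((n : ℝ) + 1))
    (φ : Fin n → ℝ → ℝ)
    (hφ : ∀ (i : Fin n) (x : ℝ), φ i x = max 0 (1 - |x / h - ((i.val : ℝ) + 1)|))
    (w : Fin (n + 1) × Fin (n + 1) × Fin (n + 1) → ℝ) (wmin wmax : ℝ)
    (hwmin : 0 < wmin) (hwminmax : wmin ≤ wmax)
    (hw : ∀ c, w c = 0 ∨ (wmin ≤ w c ∧ w c ≤ wmax))
    (nSf : ℝ × ℝ × ℝ → ℝ) (hnSfmeas : Measurable nSf)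
    (hnSf : ∀ (p q r : Fin (n + 1)) (x y z : ℝ),
      (p.val : ℝ) * h < x → x < ((p.val : ℝ) + 1) * h →
      (q.val : ℝ) * h < y → y < ((q.val : ℝ) + 1) * h →
      (r.val : ℝ) * h < z → z < ((r.val : ℝ) + 1) * h →
      nSf (x, y, z) = w (p, q, r))
    (C : Matrix (Fin n × Fin n × Fin n) (Fin n × Fin n × Fin n) ℝ)
    (hC : ∀ i j k i' j' k', C (i, j, k) (i', j', k') =
      ∫ p in (Set.Icc (0:ℝ) 1) ×ˢ (Set.Icc (0:ℝ) 1) ×ˢ (Set.Icc (0:ℝ) 1),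
        nSf p * ((φ i p.1 * φ j p.2.1 * φ k p.2.2) *
          (φ i' p.1 * φ j' p.2.1 * φ k' p.2.2))) :
    (∀ u : Fin n × Fin n × Fin n → ℝ,
      (∀ i j k, u (i, j, k) ≠ 0 → ∀ p q r : Fin (n + 1),
        (p.val = i.val ∨ p.val = i.val + 1) →
        (q.val = j.val ∨ q.val = j.val + 1) →
        (r.val = k.val ∨ r.val = k.val + 1) → w (p, q, r) = 0) →
      C.mulVec u = 0) ∧
    (∀ v : Fin n × Fin n × Fin n → ℝ,
      (∀ i j k, v (i, j, k) ≠ 0 → ∃ p q r : Fin (n + 1),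
        (p.val = i.val ∨ p.val = i.val + 1) ∧
        (q.val = j.val ∨ q.val = j.val + 1) ∧
        (r.val = k.val ∨ r.val = k.val + 1) ∧ w (p, q, r) ≠ 0) →
      wmin * (h ^ 3 / 216) * (v ⬝ᵥ v) ≤ v ⬝ᵥ C.mulVec v ∧
      v ⬝ᵥ C.mulVec v ≤ wmax * h ^ 3 * (v ⬝ᵥ v)) := by
  have hp : 0 < h := by rw [hh]; positivity
  have hwmax : 0 ≤ wmax := le_trans hwmin.le hwminmax
  have hw0 : ∀ c, 0 ≤ w c := by
    intro c; rcases hw c with e | ⟨e1, _⟩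
    · rw [e]
    · linarith
  have hCform : ∀ N N' : Fin n × Fin n × Fin n, C N N' =
      ∑ c : Fin (n+1) × Fin (n+1) × Fin (n+1),
        w c * (mval n h c.1 N.1 N'.1 * (mval n h c.2.1 N.2.1 N'.2.1 * mval n h c.2.2 N.2.2 N'.2.2)) := by
    rintro ⟨i, j, k⟩ ⟨i', j', k'⟩
    rw [hC i j k i' j' k']
    exact Centry n h hh φ hφ w nSf hnSf i j k i' j' k'
  constructor
  · -- part (a)
    intro u hu
    funext N
    obtain ⟨i, j, k⟩ := N
    show ∑ N' : Fin n × Fin n × Fin n, C (i,j,k) N' * u N' = _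
    rw [Pi.zero_apply]
    apply Finset.sum_eq_zero
    rintro ⟨i', j', k'⟩ _
    by_cases hu0 : u (i', j', k') = 0
    · rw [hu0, mul_zero]
    apply mul_eq_zero_of_left
    rw [hCform]
    apply Finset.sum_eq_zero
    rintro ⟨p, q, r⟩ _
    by_cases hA : p.val = i'.val ∨ p.val = i'.val + 1
    · by_cases hB : q.val = j'.val ∨ q.val = j'.val + 1
      · by_cases hC3 : r.val = k'.val ∨ r.val = k'.val + 1
        · rw [hu i' j' k' hu0 p q r hA hB hC3, zero_mul]
        · rw [mval_zero_right n h r k k' hC3]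
          ring
      · rw [mval_zero_right n h q j j' hB]
        ring
    · rw [mval_zero_right n h p i i' hA]
      ring
  · -- part (b)
    intro v hv
    have expand : ∀ (M : Matrix (Fin n × Fin n × Fin n) (Fin n × Fin n × Fin n) ℝ),
        v ⬝ᵥ M *ᵥ v = ∑ N, ∑ N', v N * (M N N' * v N') := by
      intro M
      simp only [dotProduct, Matrix.mulVec]
      exact Finset.sum_congr rfl (fun N _ => Finset.mul_sum _ _ _)
    set Kf : (Fin (n+1) × Fin (n+1) × Fin (n+1)) →
        Matrix (Fin n × Fin n × Fin n) (Fin n × Fin n × Fin n) ℝ :=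
      fun c => Matrix.of fun N N' =>
        mval n h c.1 N.1 N'.1 * (mval n h c.2.1 N.2.1 N'.2.1 * mval n h c.2.2 N.2.2 N'.2.2) with hKf
    set ds : (Fin (n+1) × Fin (n+1) × Fin (n+1)) → ℝ := fun c =>
      ∑ N : Fin n × Fin n × Fin n,
        (uInd n c.1 N.1 * (uInd n c.2.1 N.2.1 * uInd n c.2.2 N.2.2)) * v N ^ 2 with hds
    have hQ : v ⬝ᵥ C.mulVec v = ∑ c, w c * (v ⬝ᵥ (Kf c) *ᵥ v) := by
      rw [expand C]
      have step1 : ∀ N N' : Fin n × Fin n × Fin n, v N * (C N N' * v N')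
          = ∑ c, w c * (v N * (Kf c N N' * v N')) := by
        intro N N'
        rw [hCform N N', Finset.sum_mul, Finset.mul_sum]
        refine Finset.sum_congr rfl (fun c _ => ?_)
        simp only [hKf, Matrix.of_apply]
        ring
      calc (∑ N, ∑ N', v N * (C N N' * v N'))
          = ∑ N, ∑ N', ∑ c, w c * (v N * (Kf c N N' * v N')) := by
            exact Finset.sum_congr rfl (fun N _ => Finset.sum_congr rfl (fun N' _ => step1 N N'))
        _ = ∑ N, ∑ c, ∑ N', w c * (v N * (Kf c N N' * v N')) := by
            exact Finset.sum_congr rfl (fun N _ => Finset.sum_comm)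
        _ = ∑ c, ∑ N, ∑ N', w c * (v N * (Kf c N N' * v N')) := Finset.sum_comm
        _ = ∑ c, w c * (v ⬝ᵥ (Kf c) *ᵥ v) := by
            refine Finset.sum_congr rfl (fun c _ => ?_)
            rw [expand (Kf c), Finset.mul_sum]
            refine Finset.sum_congr rfl (fun N _ => ?_)
            rw [Finset.mul_sum]
    have hvv : v ⬝ᵥ v = ∑ N, v N ^ 2 := by
      simp only [dotProduct]
      exact Finset.sum_congr rfl (fun N _ => (sq (v N)).symm)
    have hds0 : ∀ c, 0 ≤ ds c := by
      intro c
      apply Finset.sum_nonneg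
      intro N _
      apply mul_nonneg
      · exact mul_nonneg (uInd_nonneg _ _ _) (mul_nonneg (uInd_nonneg _ _ _) (uInd_nonneg _ _ _))
      · exact sq_nonneg _
    have hKb := fun c => Kc_bounds n h hp c v
    have hqf0 : ∀ c, 0 ≤ v ⬝ᵥ (Kf c) *ᵥ v := by
      intro c
      refine le_trans ?_ (hKb c).1
      exact mul_nonneg (by positivity) (hds0 c)
    have hsum_ds : ∑ c, ds c = 8 * ∑ N, v N ^ 2 := by
      rw [hds]
      rw [Finset.sum_comm]
      have : ∀ N : Fin n × Fin n × Fin n,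
          (∑ c : Fin (n+1) × Fin (n+1) × Fin (n+1),
            (uInd n c.1 N.1 * (uInd n c.2.1 N.2.1 * uInd n c.2.2 N.2.2)) * v N ^ 2) = 8 * v N ^ 2 := by
        intro N
        rw [← Finset.sum_mul]
        have : (∑ c : Fin (n+1) × Fin (n+1) × Fin (n+1),
            uInd n c.1 N.1 * (uInd n c.2.1 N.2.1 * uInd n c.2.2 N.2.2)) = 8 := by
          rw [Fintype.sum_prod_type]
          have inner : ∀ p : Fin (n+1), (∑ c2 : Fin (n+1) × Fin (n+1),
              uInd n p N.1 * (uInd n c2.1 N.2.1 * uInd n c2.2 N.2.2))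
              = uInd n p N.1 * 4 := by
            intro p
            rw [← Finset.mul_sum]
            congr 1
            rw [Fintype.sum_prod_type]
            have : ∀ q : Fin (n+1), (∑ r : Fin (n+1), uInd n q N.2.1 * uInd n r N.2.2)
                = uInd n q N.2.1 * 2 := by
              intro q
              rw [← Finset.mul_sum, sum_uInd_eq n N.2.2]
            rw [Finset.sum_congr rfl (fun q _ => this q), ← Finset.sum_mul, sum_uInd_eq n N.2.1]
            norm_num
          rw [Finset.sum_congr rfl (fun p _ => inner p), ← Finset.sum_mul, sum_uInd_eq n N.1]
          norm_num
        rw [this]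
      rw [Finset.sum_congr rfl (fun N _ => this N), ← Finset.mul_sum]
    constructor
    · -- lower bound
      rw [hQ]
      have step : ∀ c, w c * ((h/6)^3 * ds c) ≤ w c * (v ⬝ᵥ (Kf c) *ᵥ v) := by
        intro c
        exact mul_le_mul_of_nonneg_left (hKb c).1 (hw0 c)
      have hkey : wmin * ∑ N, v N ^ 2 ≤ ∑ c, w c * ds c := by
        have swap : ∑ c, w c * ds c = ∑ N : Fin n × Fin n × Fin n,
            (∑ c, w c * (uInd n c.1 N.1 * (uInd n c.2.1 N.2.1 * uInd n c.2.2 N.2.2))) * v N ^ 2 := by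
          rw [hds]
          simp only [Finset.mul_sum]
          rw [Finset.sum_comm]
          refine Finset.sum_congr rfl (fun N _ => ?_)
          rw [Finset.sum_mul]
          exact Finset.sum_congr rfl (fun c _ => by ring)
        rw [swap, Finset.mul_sum]
        apply Finset.sum_le_sum
        rintro ⟨i, j, k⟩ _
        by_cases hvN : v (i, j, k) = 0
        · rw [hvN]
          norm_num
        · obtain ⟨p, q, r, hp', hq', hr', hwc⟩ := hv i j k hvN
          have hterm : wmin ≤ ∑ c, w c * (uInd n c.1 i * (uInd n c.2.1 j * uInd n c.2.2 k)) := by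
            have h1 : wmin ≤ w (p, q, r) * (uInd n p i * (uInd n q j * uInd n r k)) := by
              have e1 : uInd n p i = 1 := by unfold uInd; rw [if_pos hp']
              have e2 : uInd n q j = 1 := by unfold uInd; rw [if_pos hq']
              have e3 : uInd n r k = 1 := by unfold uInd; rw [if_pos hr']
              rw [e1, e2, e3]
              rcases hw (p, q, r) with e | ⟨e, _⟩
              · exact absurd e hwc
              · linarith
            refine le_trans h1 (Finset.single_le_sum (f := fun c =>
              w c * (uInd n c.1 i * (uInd n c.2.1 j * uInd n c.2.2 k))) ?_ (Finset.mem_univ (p,q,r)))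
            intro c _
            exact mul_nonneg (hw0 c) (mul_nonneg (uInd_nonneg _ _ _)
              (mul_nonneg (uInd_nonneg _ _ _) (uInd_nonneg _ _ _)))
          exact mul_le_mul_of_nonneg_right hterm (sq_nonneg _)
      calc wmin * (h ^ 3 / 216) * (v ⬝ᵥ v) = (h/6)^3 * (wmin * ∑ N, v N ^ 2) := by
            rw [hvv]; ring
        _ ≤ (h/6)^3 * (∑ c, w c * ds c) := by
            apply mul_le_mul_of_nonneg_left hkey (by positivity)
        _ = ∑ c, w c * ((h/6)^3 * ds c) := by
            rw [Finset.mul_sum]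
            exact Finset.sum_congr rfl (fun c _ => by ring)
        _ ≤ ∑ c, w c * (v ⬝ᵥ (Kf c) *ᵥ v) := Finset.sum_le_sum (fun c _ => step c)
    · -- upper bound
      rw [hQ]
      have step : ∀ c, w c * (v ⬝ᵥ (Kf c) *ᵥ v) ≤ wmax * (27 * (h/6)^3 * ds c) := by
        intro c
        calc w c * (v ⬝ᵥ (Kf c) *ᵥ v) ≤ wmax * (v ⬝ᵥ (Kf c) *ᵥ v) := by
              rcases hw c with e | ⟨_, e2⟩
              · rw [e, zero_mul]; exact mul_nonneg hwmax (hqf0 c)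
              · exact mul_le_mul_of_nonneg_right e2 (hqf0 c)
          _ ≤ wmax * (27 * (h/6)^3 * ds c) := mul_le_mul_of_nonneg_left (hKb c).2 hwmax
      calc (∑ c, w c * (v ⬝ᵥ (Kf c) *ᵥ v)) ≤ ∑ c, wmax * (27 * (h/6)^3 * ds c) :=
            Finset.sum_le_sum (fun c _ => step c)
        _ = wmax * (27 * (h/6)^3) * (∑ c, ds c) := by
            rw [Finset.mul_sum]
            exact Finset.sum_congr rfl (fun c _ => by ring)
        _ = wmax * (27 * (h/6)^3) * (8 * ∑ N, v N ^ 2) := by rw [hsum_ds]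
        _ = wmax * h ^ 3 * (v ⬝ᵥ v) := by rw [hvv]; ring

end helpers
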